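/- Let A and B be bounded self-adjoint operators on a complex Hilbert space with A² + B² = 1 and AB + BA = 0. Then for every λ with 0 < |λ| < 1, the eigenspaces ker(A - λ) and ker(A + λ) have the same dimension. -/

import Mathlib

lemma aux_rank_le {H : Type*} [NormedAddCommGroup H] [InnerProductSpace ℂ H]
    (A B : H →L[ℂ] H)
    (hsum : A * A + B * B = 1) (hanti : A * B + B * A = 0)
    (μ : ℂ) (hμ : μ * μ ≠ 1) :
    Module.rank ℂ (LinearMap.ker ((A - μ • (1 : H →L[ℂ] H) : H →L[ℂ] H) : H →ₗ[ℂ] H)) ≤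
      Module.rank ℂ (LinearMap.ker ((A + μ • (1 : H →L[ℂ] H) : H →L[ℂ] H) : H →ₗ[ℂ] H)) := by
  have hAB : ∀ x, A (B x) = -(B (A x)) := by
    intro x
    have h := congrArg (fun T : H →L[ℂ] H => T x) hanti
    simp only [ContinuousLinearMap.add_apply, ContinuousLinearMap.mul_apply,
      ContinuousLinearMap.zero_apply] at h
    rw [eq_comm, neg_eq_iff_add_eq_zero]
    rw [add_comm]; exact h
  have hmem : ∀ x ∈ LinearMap.ker ((A - μ • (1 : H →L[ℂ] H) : H →L[ℂ] H) : H →ₗ[ℂ] H),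
      B x ∈ LinearMap.ker ((A + μ • (1 : H →L[ℂ] H) : H →L[ℂ] H) : H →ₗ[ℂ] H) := by
    intro x hx
    simp only [LinearMap.mem_ker, ContinuousLinearMap.coe_coe, ContinuousLinearMap.coe_sub', ContinuousLinearMap.coe_add',
      Pi.sub_apply, Pi.add_apply, ContinuousLinearMap.coe_smul', Pi.smul_apply,
      ContinuousLinearMap.one_apply, sub_eq_zero] at hx ⊢
    rw [hAB, hx, map_smul]
    simp
  let f : LinearMap.ker ((A - μ • (1 : H →L[ℂ] H) : H →L[ℂ] H) : H →ₗ[ℂ] H) →ₗ[ℂ]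
      LinearMap.ker ((A + μ • (1 : H →L[ℂ] H) : H →L[ℂ] H) : H →ₗ[ℂ] H) :=
    LinearMap.restrict (B : H →ₗ[ℂ] H) hmem
  have hinj : Function.Injective f := by
    intro x y hxy
    have hBx : B (x - y : H) = 0 := by
      have : (B : H →ₗ[ℂ] H) x.1 = (B : H →ₗ[ℂ] H) y.1 := congrArg Subtype.val hxy
      simp only [map_sub]
      simpa [sub_eq_zero] using this
    have hx : A ((x : H) - y) = μ • ((x : H) - y) := by
      have hx1 := x.2; have hy1 := y.2
      simp only [LinearMap.mem_ker, ContinuousLinearMap.coe_coe, ContinuousLinearMap.coe_sub', Pi.sub_apply,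
        ContinuousLinearMap.coe_smul', Pi.smul_apply, ContinuousLinearMap.one_apply,
        sub_eq_zero] at hx1 hy1
      rw [map_sub, hx1, hy1, smul_sub]
    have hone := congrArg (fun T : H →L[ℂ] H => T ((x : H) - y)) hsum
    simp only [ContinuousLinearMap.add_apply, ContinuousLinearMap.mul_apply,
      ContinuousLinearMap.one_apply] at hone
    rw [hBx, map_zero, add_zero, hx, map_smul, hx, smul_smul] at hone
    have : ((x : H) - y) = 0 := by
      have h1 : (1 - μ * μ) • ((x : H) - y) = 0 := by
        rw [sub_smul, one_smul, hone, sub_self]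
      rcases smul_eq_zero.mp h1 with h | h
      · exact absurd (by linear_combination -h) hμ
      · exact h
    exact Subtype.ext (sub_eq_zero.mp this)
  exact LinearMap.rank_le_of_injective f hinj

theorem stmt_3 {H : Type*} [NormedAddCommGroup H] [InnerProductSpace ℂ H] [CompleteSpace H]
    (A B : H →L[ℂ] H)
    (hA : ContinuousLinearMap.adjoint A = A) (hB : ContinuousLinearMap.adjoint B = B)
    (hsum : A * A + B * B = 1) (hanti : A * B + B * A = 0)
    (lam : ℝ) (hlam0 : 0 < |lam|) (hlam1 : |lam| < 1) :
    Module.rank ℂ (LinearMap.ker ((A - (lam : ℂ) • (1 : H →L[ℂ] H) : H →L[ℂ] H) : H →ₗ[ℂ] H)) =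
      Module.rank ℂ (LinearMap.ker ((A + (lam : ℂ) • (1 : H →L[ℂ] H) : H →L[ℂ] H) : H →ₗ[ℂ] H)) := by
  have hμ : (lam : ℂ) * lam ≠ 1 := by
    intro h
    have : (lam : ℂ) * lam = ((lam * lam : ℝ) : ℂ) := by push_cast; ring
    rw [this] at h
    have h2 : lam * lam = 1 := by exact_mod_cast h
    nlinarith [abs_nonneg lam, sq_abs lam, sq_nonneg lam]
  have hμ' : (-(lam : ℂ)) * (-(lam : ℂ)) ≠ 1 := by simpa using hμ
  refine le_antisymm (aux_rank_le A B hsum hanti _ hμ) ?_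
  have h1 : A + (lam : ℂ) • (1 : H →L[ℂ] H) = A - (-(lam : ℂ)) • 1 := by
    rw [neg_smul, sub_neg_eq_add]
  have h2 : A - (lam : ℂ) • (1 : H →L[ℂ] H) = A + (-(lam : ℂ)) • 1 := by
    rw [neg_smul]; abel
  rw [h1, h2]
  exact aux_rank_le A B hsum hanti _ hμ'
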